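/- There exists a constant c > 0 such that for every n ≥ 2, the identity map I from Z_2^n to ℓ_2^{2n} (sending (a,b) ∈ ℝⁿ×ℝⁿ to itself with the Euclidean norm) satisfies Π₁(I) ≥ c·√n·log n. -/

import Mathlib

open scoped BigOperators

/-- The Euclidean norm on `ℝⁿ`. -/
noncomputable def l2 {n : ℕ} (b : Fin n → ℝ) : ℝ := Real.sqrt (∑ j, b j ^ 2)

/-- The Kalton–Peck map `F(b)_j = b_j log(|b_j|/‖b‖₂)`, with `F(b)_j = 0` when `b_j = 0`. -/
noncomputable def KPF {n : ℕ} (b : Fin n → ℝ) : Fin n → ℝ :=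
  fun j => if b j = 0 then 0 else b j * Real.log (|b j| / l2 b)

/-- The Kalton–Peck quasi-norm `‖(a,b)‖ = ‖b‖₂ + ‖a - F(b)‖₂` on `ℝⁿ × ℝⁿ`. -/
noncomputable def znorm {n : ℕ} (x : (Fin n → ℝ) × (Fin n → ℝ)) : ℝ :=
  l2 x.2 + l2 (x.1 - KPF x.2)

/-- Operator "norm" `sup_{x ≠ 0} N_W(T x) / N_V(x)` of a map `T` between spaces
equipped with (quasi-)norms `N_V`, `N_W`. -/
noncomputable def ratioSup {V W : Type*} [Zero V] (NV : V → ℝ) (NW : W → ℝ) (T : V → W) : ℝ :=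
  ⨆ x : {x : V // x ≠ 0}, NW (T x.1) / NV x.1

/-- The Euclidean norm on `ℝⁿ × ℝⁿ ≅ ℝ^{2n}`. -/
noncomputable def l2p {n : ℕ} (x : (Fin n → ℝ) × (Fin n → ℝ)) : ℝ :=
  Real.sqrt ((∑ j, x.1 j ^ 2) + ∑ j, x.2 j ^ 2)

/-- The 1-summing norm `Π₁(u)` of a map `u` between spaces equipped with
(quasi-)norms `N_V`, `N_W`: the least `C > 0` such that
`∑ᵢ N_W(u xᵢ) ≤ C · max_{ε ∈ {−1,1}^m} N_V(∑ᵢ εᵢ xᵢ)` for all finite families `x`. -/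
noncomputable def pi1 {V W : Type*} [AddCommGroup V] [Module ℝ V]
    (NV : V → ℝ) (NW : W → ℝ) (u : V → W) : ℝ :=
  sInf {C : ℝ | 0 < C ∧ ∀ (m : ℕ) (x : Fin m → V),
    ∑ i, NW (u (x i)) ≤ C * ⨆ ε : Fin m → Bool,
      NV (∑ i, (if ε i then (1 : ℝ) else -1) • x i)}

lemma l2_nonneg {n : ℕ} (b : Fin n → ℝ) : 0 ≤ l2 b := Real.sqrt_nonneg _

lemma znorm_nonneg {n : ℕ} (x : (Fin n → ℝ) × (Fin n → ℝ)) : 0 ≤ znorm x :=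
  add_nonneg (l2_nonneg _) (l2_nonneg _)

lemma abs_le_l2 {n : ℕ} (b : Fin n → ℝ) (j : Fin n) : |b j| ≤ l2 b := by
  rw [← Real.sqrt_sq_eq_abs]
  exact Real.sqrt_le_sqrt (Finset.single_le_sum (fun i _ => sq_nonneg (b i)) (Finset.mem_univ j))

lemma l2_le_sum {n : ℕ} (b : Fin n → ℝ) : l2 b ≤ ∑ j, |b j| := by
  rw [show (∑ j, |b j|) = Real.sqrt ((∑ j, |b j|) ^ 2) from
    (Real.sqrt_sq (Finset.sum_nonneg fun i _ => abs_nonneg _)).symm]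
  apply Real.sqrt_le_sqrt
  calc ∑ j, b j ^ 2 = ∑ j, |b j| ^ 2 := by simp [sq_abs]
    _ ≤ (∑ j, |b j|) ^ 2 := Finset.sum_sq_le_sq_sum_of_nonneg (fun i _ => abs_nonneg _)

lemma l2_eq_norm {n : ℕ} (b : Fin n → ℝ) :
    l2 b = ‖(WithLp.equiv 2 (Fin n → ℝ)).symm b‖ := by
  rw [EuclideanSpace.norm_eq]
  simp [l2, sq_abs, Real.norm_eq_abs]

lemma l2_add_le {n : ℕ} (a b : Fin n → ℝ) : l2 (a + b) ≤ l2 a + l2 b := by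
  rw [l2_eq_norm, l2_eq_norm, l2_eq_norm]
  simpa [WithLp.toLp_add] using
    norm_add_le ((WithLp.equiv 2 (Fin n → ℝ)).symm a) ((WithLp.equiv 2 (Fin n → ℝ)).symm b)

lemma abs_KPF_le {n : ℕ} (b : Fin n → ℝ) (j : Fin n) : |KPF b j| ≤ l2 b := by
  unfold KPF
  by_cases h : b j = 0
  · simp [h, l2_nonneg]
  · simp only [h, if_false]
    have hbj : 0 < |b j| := abs_pos.2 h
    have hl : 0 < l2 b := lt_of_lt_of_le hbj (abs_le_l2 b j)
    set t : ℝ := |b j| / l2 b with ht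
    have ht0 : 0 < t := div_pos hbj hl
    have ht1 : t ≤ 1 := (div_le_one hl).2 (abs_le_l2 b j)
    have key : |Real.log t * t| < 1 := Real.abs_log_mul_self_lt t ht0 ht1
    have : |b j * Real.log t| = l2 b * |Real.log t * t| := by
      rw [abs_mul, abs_mul, abs_of_pos ht0, ht]
      field_simp
    rw [this]
    calc l2 b * |Real.log t * t| ≤ l2 b * 1 := by
          exact mul_le_mul_of_nonneg_left key.le hl.le
      _ = l2 b := mul_one _

lemma l2_KPF_le {n : ℕ} (b : Fin n → ℝ) : l2 (KPF b) ≤ Real.sqrt n * l2 b := by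
  rw [show Real.sqrt n * l2 b = Real.sqrt (n * (l2 b) ^ 2) by
    rw [Real.sqrt_mul (Nat.cast_nonneg n), Real.sqrt_sq (l2_nonneg b)]]
  apply Real.sqrt_le_sqrt
  calc ∑ j, KPF b j ^ 2 ≤ ∑ _j : Fin n, (l2 b) ^ 2 := by
        refine Finset.sum_le_sum fun i _ => ?_
        rw [← sq_abs]
        exact pow_le_pow_left₀ (abs_nonneg _) (abs_KPF_le b i) 2
    _ = n * (l2 b) ^ 2 := by simp [mul_comm]

lemma l2p_le_add {n : ℕ} (v : (Fin n → ℝ) × (Fin n → ℝ)) : l2p v ≤ l2 v.1 + l2 v.2 := by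
  have h1 : (∑ j, v.1 j ^ 2) = (l2 v.1) ^ 2 :=
    (Real.sq_sqrt (Finset.sum_nonneg fun i _ => sq_nonneg _)).symm
  have h2 : (∑ j, v.2 j ^ 2) = (l2 v.2) ^ 2 :=
    (Real.sq_sqrt (Finset.sum_nonneg fun i _ => sq_nonneg _)).symm
  rw [l2p, h1, h2, show (l2 v.1)^2 + (l2 v.2)^2 = (l2 v.1 + l2 v.2)^2 - 2*(l2 v.1 * l2 v.2) by ring]
  calc Real.sqrt ((l2 v.1 + l2 v.2)^2 - 2*(l2 v.1 * l2 v.2)) ≤ Real.sqrt ((l2 v.1 + l2 v.2)^2) := by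
        apply Real.sqrt_le_sqrt
        nlinarith [l2_nonneg v.1, l2_nonneg v.2]
    _ = l2 v.1 + l2 v.2 := Real.sqrt_sq (add_nonneg (l2_nonneg _) (l2_nonneg _))

lemma l2p_le_znorm {n : ℕ} (v : (Fin n → ℝ) × (Fin n → ℝ)) :
    l2p v ≤ (1 + Real.sqrt n) * znorm v := by
  have h1 : l2 v.1 ≤ l2 (v.1 - KPF v.2) + Real.sqrt n * l2 v.2 := by
    have := l2_add_le (v.1 - KPF v.2) (KPF v.2)
    simpa using this.trans (add_le_add_right (l2_KPF_le v.2) _)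
  have hs : (0:ℝ) ≤ Real.sqrt n := Real.sqrt_nonneg _
  calc l2p v ≤ l2 v.1 + l2 v.2 := l2p_le_add v
    _ ≤ (l2 (v.1 - KPF v.2) + Real.sqrt n * l2 v.2) + l2 v.2 := by linarith
    _ ≤ (1 + Real.sqrt n) * znorm v := by
        unfold znorm
        nlinarith [l2_nonneg (v.1 - KPF v.2), l2_nonneg v.2]

lemma l2p_le_sum_abs {n : ℕ} (v : (Fin n → ℝ) × (Fin n → ℝ)) :
    l2p v ≤ (∑ k, |v.1 k|) + ∑ k, |v.2 k| :=
  (l2p_le_add v).trans (add_le_add (l2_le_sum _) (l2_le_sum _))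

lemma abs_fst_le_l2p {n : ℕ} (v : (Fin n → ℝ) × (Fin n → ℝ)) (k : Fin n) :
    |v.1 k| ≤ l2p v := by
  rw [← Real.sqrt_sq_eq_abs]
  apply Real.sqrt_le_sqrt
  have h1 : v.1 k ^ 2 ≤ ∑ j, v.1 j ^ 2 :=
    Finset.single_le_sum (f := fun j => v.1 j ^ 2) (fun i _ => sq_nonneg _) (Finset.mem_univ k)
  have h2 : (0:ℝ) ≤ ∑ j, v.2 j ^ 2 := Finset.sum_nonneg fun i _ => sq_nonneg _
  linarith

lemma abs_snd_le_l2p {n : ℕ} (v : (Fin n → ℝ) × (Fin n → ℝ)) (k : Fin n) :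
    |v.2 k| ≤ l2p v := by
  rw [← Real.sqrt_sq_eq_abs]
  apply Real.sqrt_le_sqrt
  have h1 : v.2 k ^ 2 ≤ ∑ j, v.2 j ^ 2 :=
    Finset.single_le_sum (f := fun j => v.2 j ^ 2) (fun i _ => sq_nonneg _) (Finset.mem_univ k)
  have h2 : (0:ℝ) ≤ ∑ j, v.1 j ^ 2 := Finset.sum_nonneg fun i _ => sq_nonneg _
  linarith

lemma sum_smul_fst {n m : ℕ} (c : Fin m → ℝ) (x : Fin m → (Fin n → ℝ) × (Fin n → ℝ)) (k : Fin n) :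
    (∑ i, c i • x i).1 k = ∑ i, c i * (x i).1 k := by
  rw [Prod.fst_sum, Finset.sum_apply]
  simp

lemma sum_smul_snd {n m : ℕ} (c : Fin m → ℝ) (x : Fin m → (Fin n → ℝ) × (Fin n → ℝ)) (k : Fin n) :
    (∑ i, c i • x i).2 k = ∑ i, c i * (x i).2 k := by
  rw [Prod.snd_sum, Finset.sum_apply]
  simp


/-- The admissible set for `pi1 znorm l2p id` is nonempty. -/
lemma pi1_set_nonempty (n : ℕ) :
    ∃ C : ℝ, 0 < C ∧ ∀ (m : ℕ) (x : Fin m → (Fin n → ℝ) × (Fin n → ℝ)),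
      ∑ i, l2p (x i) ≤ C * ⨆ ε : Fin m → Bool,
        znorm (∑ i, (if ε i then (1 : ℝ) else -1) • x i) := by
  refine ⟨2 * n * (1 + Real.sqrt n) + 1, by positivity, fun m x => ?_⟩
  set f : (Fin m → Bool) → ℝ :=
    fun ε => znorm (∑ i, (if ε i then (1 : ℝ) else -1) • x i) with hf
  have hT0 : 0 ≤ ⨆ ε, f ε := Real.iSup_nonneg fun ε => znorm_nonneg _
  have hbdd : BddAbove (Set.range f) := Set.Finite.bddAbove (Set.finite_range f)
  have key1 : ∀ k : Fin n, (∑ i, |(x i).1 k|) ≤ (1 + Real.sqrt n) * ⨆ ε, f ε := by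
    intro k
    set ε : Fin m → Bool := fun i => decide (0 ≤ (x i).1 k) with hε
    set Sε := ∑ i, (if ε i then (1 : ℝ) else -1) • x i with hS
    have hc : (Sε).1 k = ∑ i, |(x i).1 k| := by
      rw [hS, sum_smul_fst]
      refine Finset.sum_congr rfl fun i _ => ?_
      rcases le_or_gt 0 ((x i).1 k) with h | h
      · simp [hε, h, abs_of_nonneg h]
      · simp [hε, not_le.2 h, abs_of_neg h]
    calc (∑ i, |(x i).1 k|) = (Sε).1 k := hc.symm
      _ ≤ |(Sε).1 k| := le_abs_self _
      _ ≤ l2p Sε := abs_fst_le_l2p _ _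
      _ ≤ (1 + Real.sqrt n) * znorm Sε := l2p_le_znorm _
      _ ≤ (1 + Real.sqrt n) * ⨆ ε, f ε := by
          refine mul_le_mul_of_nonneg_left ?_ (by positivity)
          exact le_ciSup hbdd ε
  have key2 : ∀ k : Fin n, (∑ i, |(x i).2 k|) ≤ (1 + Real.sqrt n) * ⨆ ε, f ε := by
    intro k
    set ε : Fin m → Bool := fun i => decide (0 ≤ (x i).2 k) with hε
    set Sε := ∑ i, (if ε i then (1 : ℝ) else -1) • x i with hS
    have hc : (Sε).2 k = ∑ i, |(x i).2 k| := by
      rw [hS, sum_smul_snd]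
      refine Finset.sum_congr rfl fun i _ => ?_
      rcases le_or_gt 0 ((x i).2 k) with h | h
      · simp [hε, h, abs_of_nonneg h]
      · simp [hε, not_le.2 h, abs_of_neg h]
    calc (∑ i, |(x i).2 k|) = (Sε).2 k := hc.symm
      _ ≤ |(Sε).2 k| := le_abs_self _
      _ ≤ l2p Sε := abs_snd_le_l2p _ _
      _ ≤ (1 + Real.sqrt n) * znorm Sε := l2p_le_znorm _
      _ ≤ (1 + Real.sqrt n) * ⨆ ε, f ε := by
          refine mul_le_mul_of_nonneg_left ?_ (by positivity)
          exact le_ciSup hbdd ε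
  calc ∑ i, l2p (x i) ≤ ∑ i, ((∑ k, |(x i).1 k|) + ∑ k, |(x i).2 k|) :=
        Finset.sum_le_sum fun i _ => l2p_le_sum_abs _
    _ = (∑ k, ∑ i, |(x i).1 k|) + ∑ k, ∑ i, |(x i).2 k| := by
        rw [Finset.sum_add_distrib, Finset.sum_comm, Finset.sum_comm (f := fun i k => |(x i).2 k|)]
    _ ≤ (∑ _k : Fin n, (1 + Real.sqrt n) * ⨆ ε, f ε)
          + ∑ _k : Fin n, (1 + Real.sqrt n) * ⨆ ε, f ε :=
        add_le_add (Finset.sum_le_sum fun k _ => key1 k) (Finset.sum_le_sum fun k _ => key2 k)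
    _ = 2 * n * (1 + Real.sqrt n) * ⨆ ε, f ε := by
        simp [Finset.sum_const]
        ring
    _ ≤ (2 * n * (1 + Real.sqrt n) + 1) * ⨆ ε, f ε := by nlinarith [Real.sqrt_nonneg (n:ℝ)]

/-- The 1-summing norm of the identity `Z_2^n → ℓ_2^{2n}` is at least `c·√n·log n`. -/
theorem pi1_znorm_to_l2_lower :
    ∃ c : ℝ, 0 < c ∧ ∀ n : ℕ, 2 ≤ n →
      c * Real.sqrt n * Real.log n ≤
        pi1 znorm l2p (fun x : (Fin n → ℝ) × (Fin n → ℝ) => x) := by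
  refine ⟨1/2, by norm_num, fun n hn => ?_⟩
  have hn0 : (0:ℝ) < n := by positivity
  have hn1 : (1:ℝ) ≤ n := by exact_mod_cast Nat.one_le_of_lt hn
  set L : ℝ := Real.log n / 2 with hLdef
  have hL : 0 ≤ L := by
    have := Real.log_nonneg hn1
    positivity
  have hsn : 0 < Real.sqrt n := Real.sqrt_pos.2 hn0
  unfold pi1
  apply le_csInf
  · obtain ⟨C, hC1, hC2⟩ := pi1_set_nonempty n
    exact ⟨C, hC1, hC2⟩
  rintro C ⟨hC0, hC⟩
  set x : Fin n → (Fin n → ℝ) × (Fin n → ℝ) :=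
    fun j => (fun k => if k = j then -L else 0, fun k => if k = j then 1 else 0) with hx
  -- each vector has Euclidean length √(L² + 1)
  have hxl : ∀ j, l2p (x j) = Real.sqrt (L ^ 2 + 1) := by
    intro j
    unfold l2p
    congr 1
    have e1 : ∑ k, ((if k = j then -L else (0:ℝ))) ^ 2 = L ^ 2 := by
      rw [Finset.sum_congr rfl (fun k _ =>
        show ((if k = j then -L else (0:ℝ))) ^ 2 = if k = j then L ^ 2 else 0 by
          split <;> ring)]
      simp
    have e2 : ∑ k, ((if k = j then (1:ℝ) else 0)) ^ 2 = 1 := by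
      rw [Finset.sum_congr rfl (fun k _ =>
        show ((if k = j then (1:ℝ) else 0)) ^ 2 = if k = j then (1:ℝ) else 0 by
          split <;> ring)]
      simp
    rw [hx]
    simp only []
    rw [e1, e2]
  -- every signed sum has Kalton–Peck norm exactly √n
  have hz : ∀ ε : Fin n → Bool,
      znorm (∑ i, (if ε i then (1:ℝ) else -1) • x i) = Real.sqrt n := by
    intro ε
    set c : Fin n → ℝ := fun i => if ε i then 1 else -1 with hcdef
    have hcne : ∀ k, c k ≠ 0 := by
      intro k; by_cases h : ε k <;> simp [hcdef, h]
    have hcabs : ∀ k, |c k| = 1 := by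
      intro k; by_cases h : ε k <;> simp [hcdef, h]
    have hc2 : ∀ k, c k ^ 2 = 1 := by
      intro k; by_cases h : ε k <;> simp [hcdef, h]
    have hceq : (∑ i, (if ε i then (1:ℝ) else -1) • x i)
        = (fun k => c k * -L, c) := by
      refine Prod.ext ?_ ?_
      · funext k
        rw [show (∑ i, (if ε i then (1:ℝ) else -1) • x i).1 k
            = ∑ i, c i * (x i).1 k from sum_smul_fst c x k]
        simp [hx, mul_ite, Finset.sum_ite_eq]
      · funext k
        rw [show (∑ i, (if ε i then (1:ℝ) else -1) • x i).2 k
            = ∑ i, c i * (x i).2 k from sum_smul_snd c x k]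
        simp [hx, mul_ite, Finset.sum_ite_eq, hcdef]
    rw [hceq]
    have hl2c : l2 c = Real.sqrt n := by
      unfold l2
      rw [Finset.sum_congr rfl fun k _ => hc2 k]
      simp
    have hKPF : KPF c = fun k => c k * -L := by
      funext k
      unfold KPF
      rw [if_neg (hcne k), hl2c, hcabs k, one_div, Real.log_inv,
        Real.log_sqrt hn0.le, hLdef]
    unfold znorm
    simp only []
    rw [hKPF, hl2c]
    have : (fun k => c k * -L) - (fun k => c k * -L) = (0 : Fin n → ℝ) := sub_self _
    rw [this]
    have : l2 (0 : Fin n → ℝ) = 0 := by unfold l2; simp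
    rw [this, add_zero]
  have hsup : (⨆ ε : Fin n → Bool,
      znorm (∑ i, (if ε i then (1:ℝ) else -1) • x i)) = Real.sqrt n := by
    simp only [hz]
    exact ciSup_const
  have hC' := hC n x
  rw [hsup] at hC'
  have hlhs : ∑ i, l2p ((fun v : (Fin n → ℝ) × (Fin n → ℝ) => v) (x i))
      = (n:ℝ) * Real.sqrt (L ^ 2 + 1) := by
    simp only []
    rw [Finset.sum_congr rfl fun j _ => hxl j]
    simp [mul_comm]
  rw [hlhs] at hC'
  have hL_le : L ≤ Real.sqrt (L ^ 2 + 1) := by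
    have h := Real.sqrt_le_sqrt (show L ^ 2 ≤ L ^ 2 + 1 by linarith)
    rwa [Real.sqrt_sq hL] at h
  have h1 : (n:ℝ) * L ≤ C * Real.sqrt n :=
    le_trans (mul_le_mul_of_nonneg_left hL_le hn0.le) hC'
  have hmul : Real.sqrt n * Real.sqrt n = (n:ℝ) := Real.mul_self_sqrt hn0.le
  have h2 : (Real.sqrt n * L) * Real.sqrt n ≤ C * Real.sqrt n := by nlinarith
  have h3 : Real.sqrt n * L ≤ C := le_of_mul_le_mul_right h2 hsn
  calc 1/2 * Real.sqrt n * Real.log n = Real.sqrt n * L := by rw [hLdef]; ring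
    _ ≤ C := h3
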